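/- The big-M formulation is valid for the ReLU neuron: {(x, y) : ∃ z, (z = 0 ∨ z = 1) ∧ (x, y, z) ∈ R} = gr, where R is the LP relaxation of the big-M formulation. -/

import Mathlib

open Finset

/-- The affine function `f(x) = w · x + b`. -/
noncomputable def fAff {η : ℕ} (w : Fin η → ℝ) (b : ℝ) (x : Fin η → ℝ) : ℝ :=
  (∑ i, w i * x i) + b

/-- The rectified linear unit. -/
noncomputable def ReLU (v : ℝ) : ℝ := max 0 v

/-- The box `[L, U]`. -/
def Box {η : ℕ} (L U : Fin η → ℝ) : Set (Fin η → ℝ) :=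
  {x | ∀ i, L i ≤ x i ∧ x i ≤ U i}

/-- `L̆ i`. -/
noncomputable def Lbreve {η : ℕ} (w L U : Fin η → ℝ) (i : Fin η) : ℝ :=
  if 0 ≤ w i then L i else U i

/-- `Ŭ i`. -/
noncomputable def Ubreve {η : ℕ} (w L U : Fin η → ℝ) (i : Fin η) : ℝ :=
  if 0 ≤ w i then U i else L i

/-- The graph of the ReLU neuron over the box. -/
noncomputable def grSet {η : ℕ} (w : Fin η → ℝ) (b : ℝ) (L U : Fin η → ℝ) :
    Set ((Fin η → ℝ) × ℝ) :=
  {p | ∃ x ∈ Box L U, p = (x, ReLU (fAff w b x))}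

/-- The LP relaxation `P` of the ideal non-extended formulation. A point is
`(x, y, z)` with `x = p.1`, `y = p.2.1`, `z = p.2.2`. -/
noncomputable def Pset {η : ℕ} (w : Fin η → ℝ) (b : ℝ) (L U : Fin η → ℝ) :
    Set ((Fin η → ℝ) × ℝ × ℝ) :=
  {p | p.1 ∈ Box L U ∧ 0 ≤ p.2.1 ∧ 0 ≤ p.2.2 ∧ p.2.2 ≤ 1 ∧ fAff w b p.1 ≤ p.2.1 ∧
    ∀ I : Finset (Fin η), (∀ i ∈ I, w i ≠ 0) →
      p.2.1 ≤ (∑ i ∈ I, w i * (p.1 i - Lbreve w L U i * (1 - p.2.2)))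
        + (b + ∑ i ∈ Iᶜ, w i * Ubreve w L U i) * p.2.2}

/-- The LP relaxation `R` of the big-`M` formulation. -/
noncomputable def Rset {η : ℕ} (w : Fin η → ℝ) (b : ℝ) (L U : Fin η → ℝ) :
    Set ((Fin η → ℝ) × ℝ × ℝ) :=
  {p | p.1 ∈ Box L U ∧ 0 ≤ p.2.1 ∧ 0 ≤ p.2.2 ∧ p.2.2 ≤ 1 ∧ fAff w b p.1 ≤ p.2.1 ∧
    p.2.1 ≤ fAff w b p.1 - ((∑ i, w i * Lbreve w L U i) + b) * (1 - p.2.2) ∧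
    p.2.1 ≤ ((∑ i, w i * Ubreve w L U i) + b) * p.2.2}

/-- The LP relaxation `Q` of the multiple-choice extended formulation. A point is
`(x, y, z, x⁰, x¹, y⁰, y¹)`. -/
noncomputable def Qset {η : ℕ} (w : Fin η → ℝ) (b : ℝ) (L U : Fin η → ℝ) :
    Set ((Fin η → ℝ) × ℝ × ℝ × (Fin η → ℝ) × (Fin η → ℝ) × ℝ × ℝ) :=
  {q | match q with
    | (x, y, z, x0, x1, y0, y1) =>
      x = x0 + x1 ∧ y = y0 + y1 ∧ y0 = 0 ∧
      (∑ i, w i * x0 i) + b * (1 - z) ≤ 0 ∧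
      y1 = (∑ i, w i * x1 i) + b * z ∧ 0 ≤ y1 ∧
      (∀ i, L i * (1 - z) ≤ x0 i ∧ x0 i ≤ U i * (1 - z)) ∧
      (∀ i, L i * z ≤ x1 i ∧ x1 i ≤ U i * z) ∧
      0 ≤ z ∧ z ≤ 1}


lemma fAff_bounds {η : ℕ} (w : Fin η → ℝ) (b : ℝ) (L U : Fin η → ℝ)
    {x : Fin η → ℝ} (hx : x ∈ Box L U) :
    (∑ i, w i * Lbreve w L U i) + b ≤ fAff w b x ∧
      fAff w b x ≤ (∑ i, w i * Ubreve w L U i) + b := by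
  constructor
  · refine add_le_add_left (Finset.sum_le_sum fun i _ => ?_) b
    unfold Lbreve
    rcases le_or_gt 0 (w i) with h | h
    · simp only [if_pos h]; exact mul_le_mul_of_nonneg_left (hx i).1 h
    · simp only [if_neg (not_le.mpr h)]
      exact mul_le_mul_of_nonpos_left (hx i).2 h.le
  · refine add_le_add_left (Finset.sum_le_sum fun i _ => ?_) b
    unfold Ubreve
    rcases le_or_gt 0 (w i) with h | h
    · simp only [if_pos h]; exact mul_le_mul_of_nonneg_left (hx i).2 h
    · simp only [if_neg (not_le.mpr h)]
      exact mul_le_mul_of_nonpos_left (hx i).1 h.le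

/-- Validity of the big-`M` formulation for the ReLU neuron. -/
theorem bigM_valid {η : ℕ} (w : Fin η → ℝ) (b : ℝ) (L U : Fin η → ℝ)
    (hLU : ∀ i, L i < U i) :
    {p : (Fin η → ℝ) × ℝ |
        ∃ z : ℝ, (z = 0 ∨ z = 1) ∧ (p.1, p.2, z) ∈ Rset w b L U}
      = grSet w b L U := by
  ext p
  constructor
  · rintro ⟨z, hz01, hx, hy0, _, _, hfy, hyM, hyMp⟩
    refine ⟨p.1, hx, ?_⟩
    rcases hz01 with rfl | rfl
    · have : p.2 = 0 := le_antisymm (by simpa using hyMp) hy0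
      have hf0 : fAff w b p.1 ≤ 0 := this ▸ hfy
      rw [show ReLU (fAff w b p.1) = 0 from max_eq_left hf0, ← this]
    · have : p.2 = fAff w b p.1 := le_antisymm (by simpa using hyM) hfy
      rw [show ReLU (fAff w b p.1) = p.2 by rw [this]; exact max_eq_right (this ▸ hy0)]
  · rintro ⟨x, hx, rfl⟩
    obtain ⟨hlo, hhi⟩ := fAff_bounds w b L U hx
    rcases le_or_gt (fAff w b x) 0 with hf | hf
    · refine ⟨0, Or.inl rfl, hx, le_max_left _ _, le_refl _, zero_le_one, ?_, ?_, ?_⟩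
      · simpa [ReLU, max_eq_left hf] using hf
      · simp only [ReLU, max_eq_left hf]
        nlinarith
      · simp [ReLU, max_eq_left hf]
    · refine ⟨1, Or.inr rfl, hx, le_max_left _ _, zero_le_one, le_refl _, ?_, ?_, ?_⟩
      · simp [ReLU, max_eq_right hf.le]
      · simp [ReLU, max_eq_right hf.le]
      · simpa [ReLU, max_eq_right hf.le] using hhi
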